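/- Let $(a_n)_{n\in\mathbb{Z}}$, $(b_n)_{n\in\mathbb{Z}}$, $(c_n)_{n\in\mathbb{Z}}$ be positive sequences, $C \ge 1$ with $\frac{a_m b_n}{a_n b_m} \le C$ for all $m \le n$, and $(\beta_k)_{k\in\mathbb{Z}}$ positive with $\beta = \sum_{k\in\mathbb{Z}} \beta_k < \infty$. Set, for $m \ge n$, $a_{m,n} = \frac{a_n}{a_m} c_n$ and $B_k := \frac{a_k}{a_{k+1} c_{k+1}}\beta_k$, and for $m \le n$, $b_{m,n} = \frac{b_n}{b_m} c_n$. Then for all $m \ge n$: $\sum_{k=-\infty}^{n-1} a_{m,k+1} B_k b_{k,n} + \sum_{k=n}^{m-1} a_{m,k+1} B_k a_{k,n} + \sum_{k=m}^{\infty} b_{m,k+1} B_k a_{k,n} \le \frac{a_n}{a_m} c_n \beta C$. -/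

import Mathlib

/-- Estimate of `λ_{m,n}` for general dichotomies with product-form bounds on `ℤ`. -/
theorem stmt_10 (a b c : ℤ → ℝ) (ha : ∀ n, 0 < a n) (hb : ∀ n, 0 < b n)
    (hc : ∀ n, 0 < c n) (C : ℝ) (hC1 : 1 ≤ C)
    (hC : ∀ m n : ℤ, m ≤ n → a m * b n / (a n * b m) ≤ C)
    (β : ℤ → ℝ) (hβpos : ∀ k, 0 < β k) (hβ : Summable β)
    (A : ℤ → ℤ → ℝ) (hA : ∀ m n : ℤ, n ≤ m → A m n = a n / a m * c n)
    (Bd : ℤ → ℤ → ℝ) (hBd : ∀ m n : ℤ, m ≤ n → Bd m n = b n / b m * c n)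
    (B : ℤ → ℝ) (hB : ∀ k : ℤ, B k = a k / (a (k + 1) * c (k + 1)) * β k)
    (m n : ℤ) (hmn : n ≤ m) :
    (∑' k : {k : ℤ // k < n}, A m ((k : ℤ) + 1) * B k * Bd k n)
      + (∑ k ∈ Finset.Ico n m, A m (k + 1) * B k * A k n)
      + (∑' k : {k : ℤ // m ≤ k}, Bd m ((k : ℤ) + 1) * B k * A k n)
      ≤ a n / a m * c n * (∑' k : ℤ, β k) * C := by
  set K : ℝ := a n / a m * c n * C with hK
  have hKpos : 0 < K := by
    have := ha n; have := ha m; have := hc n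
    positivity
  set g : ℤ → ℝ := fun k => K * β k with hg
  have hgsum : Summable g := hβ.mul_left K
  -- pointwise bound on the left piece
  have h1 : ∀ k : ℤ, k < n → A m (k + 1) * B k * Bd k n ≤ g k := by
    intro k hk
    have e1 : A m (k + 1) * B k * Bd k n
        = (a n / a m * c n * β k) * (a k * b n / (a n * b k)) := by
      rw [hA m (k + 1) (by omega), hBd k n (by omega), hB k]
      have := ha k; have := ha (k+1); have := ha m; have := ha n
      have := hb k; have := hb n; have := hc (k+1); have := hc n
      field_simp
    rw [e1]
    have hr := hC k n (le_of_lt hk)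
    have hx : 0 < a n / a m * c n * β k := by
      have := ha n; have := ha m; have := hc n; have := hβpos k; positivity
    calc (a n / a m * c n * β k) * (a k * b n / (a n * b k))
        ≤ (a n / a m * c n * β k) * C := by
          exact mul_le_mul_of_nonneg_left hr hx.le
      _ = g k := by simp only [hg, hK]; ring
  -- pointwise bound on the middle piece
  have h2 : ∀ k : ℤ, n ≤ k → k < m → A m (k + 1) * B k * A k n ≤ g k := by
    intro k hk1 hk2
    have e1 : A m (k + 1) * B k * A k n = a n / a m * c n * β k := by
      rw [hA m (k + 1) (by omega), hA k n hk1, hB k]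
      have := ha k; have := ha (k+1); have := ha m; have := ha n
      have := hc (k+1); have := hc n
      field_simp
    rw [e1]
    have hx : 0 < a n / a m * c n * β k := by
      have := ha n; have := ha m; have := hc n; have := hβpos k; positivity
    calc a n / a m * c n * β k = (a n / a m * c n * β k) * 1 := by ring
      _ ≤ (a n / a m * c n * β k) * C := mul_le_mul_of_nonneg_left hC1 hx.le
      _ = g k := by simp only [hg, hK]; ring
  -- pointwise bound on the right piece
  have h3 : ∀ k : ℤ, m ≤ k → Bd m (k + 1) * B k * A k n ≤ g k := by
    intro k hk
    have e1 : Bd m (k + 1) * B k * A k n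
        = (a n / a m * c n * β k) * (a m * b (k + 1) / (a (k + 1) * b m)) := by
      rw [hBd m (k + 1) (by omega), hA k n (by omega), hB k]
      have := ha k; have := ha (k+1); have := ha m; have := ha n
      have := hb m; have := hb (k+1); have := hc (k+1); have := hc n
      field_simp
    rw [e1]
    have hr := hC m (k + 1) (by omega)
    have hx : 0 < a n / a m * c n * β k := by
      have := ha n; have := ha m; have := hc n; have := hβpos k; positivity
    calc (a n / a m * c n * β k) * (a m * b (k + 1) / (a (k + 1) * b m))
        ≤ (a n / a m * c n * β k) * C := mul_le_mul_of_nonneg_left hr hx.le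
      _ = g k := by simp only [hg, hK]; ring
  -- nonnegativity of pieces
  have hpos1 : ∀ k : ℤ, k < n → 0 ≤ A m (k + 1) * B k * Bd k n := by
    intro k hk
    rw [hA m (k + 1) (by omega), hBd k n (by omega), hB k]
    have := ha k; have := ha (k+1); have := ha m; have := ha n
    have := hb k; have := hb n; have := hc (k+1); have := hc n; have := hβpos k
    positivity
  have hpos3 : ∀ k : ℤ, m ≤ k → 0 ≤ Bd m (k + 1) * B k * A k n := by
    intro k hk
    rw [hBd m (k + 1) (by omega), hA k n (by omega), hB k]
    have := ha k; have := ha (k+1); have := ha m; have := ha n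
    have := hb m; have := hb (k+1); have := hc (k+1); have := hc n; have := hβpos k
    positivity
  -- summability over the subtypes
  have hgsub1 : Summable fun k : {k : ℤ // k < n} => g k := hgsum.subtype _
  have hgsub3 : Summable fun k : {k : ℤ // m ≤ k} => g k := hgsum.subtype _
  have hf1 : Summable fun k : {k : ℤ // k < n} => A m ((k : ℤ) + 1) * B k * Bd k n :=
    Summable.of_nonneg_of_le (fun k => hpos1 k k.2) (fun k => h1 k k.2) hgsub1
  have hf3 : Summable fun k : {k : ℤ // m ≤ k} => Bd m ((k : ℤ) + 1) * B k * A k n :=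
    Summable.of_nonneg_of_le (fun k => hpos3 k k.2) (fun k => h3 k k.2) hgsub3
  have t1 : (∑' k : {k : ℤ // k < n}, A m ((k : ℤ) + 1) * B k * Bd k n)
      ≤ ∑' k : {k : ℤ // k < n}, g k :=
    Summable.tsum_le_tsum (fun k => h1 k k.2) hf1 hgsub1
  have t2 : (∑ k ∈ Finset.Ico n m, A m (k + 1) * B k * A k n)
      ≤ ∑ k ∈ Finset.Ico n m, g k := by
    apply Finset.sum_le_sum
    intro k hk
    rw [Finset.mem_Ico] at hk
    exact h2 k hk.1 hk.2
  have t3 : (∑' k : {k : ℤ // m ≤ k}, Bd m ((k : ℤ) + 1) * B k * A k n)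
      ≤ ∑' k : {k : ℤ // m ≤ k}, g k :=
    Summable.tsum_le_tsum (fun k => h3 k k.2) hf3 hgsub3
  -- decomposition of the total sum of g
  have hdecomp : (∑' k : {k : ℤ // k < n}, g k) + (∑ k ∈ Finset.Ico n m, g k)
      + (∑' k : {k : ℤ // m ≤ k}, g k) = ∑' k : ℤ, g k := by
    have hsets : ({k : ℤ | k < n} ∪ {k : ℤ | m ≤ k}) = (↑(Finset.Ico n m) : Set ℤ)ᶜ := by
      ext k
      simp only [Set.mem_union, Set.mem_setOf_eq, Set.mem_compl_iff, Finset.coe_Ico,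
        Set.mem_Ico, not_and, not_lt]
      omega
    have hdisj : Disjoint {k : ℤ | k < n} {k : ℤ | m ≤ k} := by
      rw [Set.disjoint_left]
      intro k hk1 hk2
      simp only [Set.mem_setOf_eq] at hk1 hk2
      omega
    have hu : (∑' k : ↥({k : ℤ | k < n} ∪ {k : ℤ | m ≤ k}), g k)
        = (∑' k : {k : ℤ | k < n}, g k) + (∑' k : {k : ℤ | m ≤ k}, g k) :=
      (hgsum.subtype _).tsum_union_disjoint hdisj (hgsum.subtype _)
    have hcompl : (∑' k : (↑(Finset.Ico n m) : Set ℤ), g k)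
        + (∑' k : ((↑(Finset.Ico n m) : Set ℤ)ᶜ : Set ℤ), g k) = ∑' k : ℤ, g k :=
      Summable.tsum_add_tsum_compl (hgsum.subtype _) (hgsum.subtype _)
    have hfin : (∑' k : (↑(Finset.Ico n m) : Set ℤ), g k) = ∑ k ∈ Finset.Ico n m, g k :=
      Finset.tsum_subtype _ _
    rw [hsets] at hu
    rw [hu] at hcompl
    rw [hfin] at hcompl
    have e1 : (∑' k : ↑{k : ℤ | k < n}, g k) = ∑' k : {k : ℤ // k < n}, g k := rfl
    have e3 : (∑' k : ↑{k : ℤ | m ≤ k}, g k) = ∑' k : {k : ℤ // m ≤ k}, g k := rfl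
    rw [e1, e3] at hcompl
    linarith [hcompl]
  have hfinal : (∑' k : ℤ, g k) = a n / a m * c n * (∑' k : ℤ, β k) * C := by
    rw [hg]
    rw [tsum_mul_left]
    rw [hK]; ring
  linarith [t1, t2, t3]
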